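/- For every h > 0 and every n ≥ 0, all coefficients ψ_{n,s}^{(h)} in the factorial-series expansion 1/x^n = Σ_{s≥n} ψ_{n,s}^{(h)} · x^{-[s]_h} (valid for Re(x) large) are nonnegative real numbers. -/

import Mathlib

open Finset Filter

namespace FSAux

variable (h : ℝ)

/-- the real kernel product -/
def P (h x : ℝ) (t : ℕ) : ℝ := ∏ k ∈ Finset.range t, (x + k * h)

lemma P_pos {h x : ℝ} (hh : 0 < h) (hx : 0 < x) (t : ℕ) : 0 < P h x t :=
  Finset.prod_pos fun k _ => by positivity

lemma P_le_P {h x y : ℝ} (hh : 0 < h) (hx : 0 < x) (hxy : x ≤ y) (t : ℕ) :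
    P h x t ≤ P h y t := by
  apply Finset.prod_le_prod (fun k _ => by positivity) (fun k _ => by linarith)

/-- generic telescoping identity -/
lemma telescope (a b : ℝ) (m : ℕ) :
    (∏ k ∈ Finset.range m, (a + k * b)) * ((a + m * b) * (a + (m + 1) * b))
      = a * (a + b) * ∏ k ∈ Finset.range m, (a + 2 * b + k * b) := by
  induction m with
  | zero => simp
  | succ m ih =>
    rw [Finset.prod_range_succ, Finset.prod_range_succ]
    push_cast
    linear_combination (a + (m+1+1)*b) * ih

end FSAux

namespace FSAux

lemma pow_mul_asc (h : ℝ) (s m : ℕ) :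
    h ^ m * (Nat.ascFactorial s m : ℝ) = ∏ k ∈ Finset.range m, (s * h + k * h) := by
  induction m with
  | zero => simp
  | succ m ih =>
    rw [Finset.prod_range_succ, ← ih, Nat.ascFactorial_succ]
    push_cast
    ring

lemma P_add (h x : ℝ) (s m : ℕ) :
    P h x (s + m) = P h x s * ∏ k ∈ Finset.range m, (x + (s + k) * h) := by
  unfold P
  rw [Finset.prod_range_add]
  congr 1
  apply Finset.prod_congr rfl
  intro k _
  push_cast
  ring

/-- remainder of the shifted expansion -/
noncomputable def r (h x : ℝ) (s m : ℕ) : ℝ :=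
  h ^ m * (Nat.ascFactorial s m : ℝ) * (P h x (s + m))⁻¹ * x⁻¹

lemma r_nonneg {h x : ℝ} (hh : 0 < h) (hx : 0 < x) (s m : ℕ) : 0 ≤ r h x s m := by
  have := P_pos hh hx (s + m)
  unfold r
  positivity

lemma r_zero (h x : ℝ) (s : ℕ) : r h x s 0 = (P h x s)⁻¹ * x⁻¹ := by
  simp [r]

lemma r_sub (hh : 0 < h) {x : ℝ} (hx : 0 < x) (s m : ℕ) :
    r h x s m - r h x s (m + 1)
      = h ^ m * (Nat.ascFactorial s m : ℝ) * (P h x (s + m + 1))⁻¹ := by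
  have hPm := P_pos hh hx (s + m)
  have hfac : (0:ℝ) < x + (s + m) * h := by positivity
  have hP1 : P h x (s + (m + 1)) = P h x (s + m) * (x + ((s:ℝ) + m) * h) := by
    unfold P
    rw [← Nat.add_assoc, Finset.prod_range_succ]
    push_cast; ring
  have hP2 : P h x (s + m + 1) = P h x (s + m) * (x + ((s:ℝ) + m) * h) := by
    rw [← hP1, Nat.add_assoc]
  rw [r, r, Nat.ascFactorial_succ, hP1, hP2]
  have hx' : x ≠ 0 := ne_of_gt hx
  have hPm' : P h x (s + m) ≠ 0 := ne_of_gt hPm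
  have hfac' : x + ((s:ℝ) + m) * h ≠ 0 := ne_of_gt hfac
  push_cast
  field_simp
  ring

lemma partial_sum_eq (hh : 0 < h) {x : ℝ} (hx : 0 < x) (s m : ℕ) :
    ∑ j ∈ Finset.range m,
        h ^ j * (Nat.ascFactorial s j : ℝ) * (P h x (s + j + 1))⁻¹
      = r h x s 0 - r h x s m := by
  induction m with
  | zero => simp
  | succ m ih =>
    rw [Finset.sum_range_succ, ih, ← r_sub hh hx]
    ring

lemma r_bound (hh : 0 < h) {x : ℝ} (hx : 2 * h ≤ x) (s m : ℕ) (hsm : 0 < s + m) :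
    r h x s m ≤ (s * h * (s * h + h) * (P h x s)⁻¹ * x⁻¹) /
      ((s * h + m * h) * (s * h + (m + 1) * h)) := by
  have hx0 : 0 < x := lt_of_lt_of_le (by positivity) hx
  have hPs := P_pos hh hx0 s
  have hPsm := P_pos hh hx0 (s + m)
  have hden : 0 < (s * h + m * h) * ((s:ℝ) * h + (m + 1) * h) := by
    have h1 : (0:ℝ) < s + m := by exact_mod_cast hsm
    have : (0:ℝ) < (s:ℝ) * h + m * h := by nlinarith
    have : (0:ℝ) < (s:ℝ) * h + (m+1) * h := by nlinarith
    nlinarith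
  rw [le_div_iff₀ hden]
  -- key chain
  have key : h ^ m * (Nat.ascFactorial s m : ℝ) * ((s * h + m * h) * (s * h + (m + 1) * h))
      ≤ s * h * (s * h + h) * ∏ k ∈ Finset.range m, (x + (s + k) * h) := by
    rw [pow_mul_asc, telescope (s * h) h m]
    apply mul_le_mul_of_nonneg_left _ (by positivity)
    apply Finset.prod_le_prod (fun k _ => by positivity) (fun k _ => by push_cast; nlinarith)
  have hprod : (0:ℝ) < ∏ k ∈ Finset.range m, (x + (s + k) * h) :=
    Finset.prod_pos fun k _ => by positivity
  have hPadd := P_add h x s m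
  rw [r]
  rw [hPadd, mul_inv]
  calc h ^ m * (Nat.ascFactorial s m : ℝ) *
        ((P h x s)⁻¹ * (∏ k ∈ Finset.range m, (x + (s + k) * h))⁻¹) * x⁻¹ *
        ((s * h + m * h) * (s * h + (m + 1) * h))
      = (h ^ m * (Nat.ascFactorial s m : ℝ) * ((s * h + m * h) * (s * h + (m + 1) * h)))
        * ((P h x s)⁻¹ * (∏ k ∈ Finset.range m, (x + (s + k) * h))⁻¹ * x⁻¹) := by ring
    _ ≤ (s * h * (s * h + h) * ∏ k ∈ Finset.range m, (x + (s + k) * h))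
        * ((P h x s)⁻¹ * (∏ k ∈ Finset.range m, (x + (s + k) * h))⁻¹ * x⁻¹) := by
        apply mul_le_mul_of_nonneg_right key (by positivity)
    _ = s * h * (s * h + h) * (P h x s)⁻¹ * x⁻¹ := by
        field_simp

lemma r_tendsto (hh : 0 < h) {x : ℝ} (hx : 2 * h ≤ x) (s : ℕ) :
    Filter.Tendsto (fun m => r h x s m) Filter.atTop (nhds 0) := by
  have hx0 : 0 < x := lt_of_lt_of_le (by positivity) hx
  have hden : Filter.Tendsto
      (fun m : ℕ => ((s:ℝ) * h + m * h) * ((s:ℝ) * h + (m + 1) * h))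
      Filter.atTop Filter.atTop := by
    have h1 : Filter.Tendsto (fun m : ℕ => (s:ℝ) * h + m * h) Filter.atTop Filter.atTop := by
      apply Filter.tendsto_atTop_add_const_left
      exact Filter.Tendsto.atTop_mul_const hh tendsto_natCast_atTop_atTop
    have h2 : Filter.Tendsto (fun m : ℕ => (s:ℝ) * h + ((m:ℝ) + 1) * h) Filter.atTop Filter.atTop := by
      apply Filter.tendsto_atTop_add_const_left
      apply Filter.Tendsto.atTop_mul_const hh
      exact Filter.tendsto_atTop_add_const_right _ _ tendsto_natCast_atTop_atTop
    exact Filter.Tendsto.atTop_mul_atTop₀ h1 h2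
  have hb : Filter.Tendsto
      (fun m : ℕ => (s * h * (s * h + h) * (P h x s)⁻¹ * x⁻¹) /
        (((s:ℝ) * h + m * h) * ((s:ℝ) * h + (m + 1) * h)))
      Filter.atTop (nhds 0) := Filter.Tendsto.div_atTop tendsto_const_nhds hden
  apply squeeze_zero' ?_ ?_ hb
  · exact Filter.Eventually.of_forall fun m => r_nonneg hh hx0 s m
  · filter_upwards [Filter.eventually_ge_atTop 1] with m hm
    exact r_bound hh hx s m (by omega)

lemma hasSum_shift (hh : 0 < h) {x : ℝ} (hx : 2 * h ≤ x) (s : ℕ) :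
    HasSum (fun j => h ^ j * (Nat.ascFactorial s j : ℝ) * (P h x (s + j + 1))⁻¹)
      ((P h x s)⁻¹ * x⁻¹) := by
  have hx0 : 0 < x := lt_of_lt_of_le (by positivity) hx
  rw [hasSum_iff_tendsto_nat_of_nonneg]
  · have heq : ∀ m, ∑ j ∈ Finset.range m,
        h ^ j * (Nat.ascFactorial s j : ℝ) * (P h x (s + j + 1))⁻¹
        = r h x s 0 - r h x s m := partial_sum_eq hh hx0 s
    simp only [heq, r_zero]
    have := (r_tendsto hh hx s).const_sub ((P h x s)⁻¹ * x⁻¹)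
    simpa using this
  · intro j
    have := P_pos hh hx0 (s + j + 1)
    positivity

end FSAux

namespace FSAux

/-- the explicit nonnegative coefficients -/
noncomputable def c (h : ℝ) : ℕ → ℕ → ℝ
  | 0 => fun s => if s = 0 then 1 else 0
  | n + 1 => fun t => ∑ s ∈ Finset.range t,
      c h n s * h ^ (t - 1 - s) * (Nat.ascFactorial s (t - 1 - s) : ℝ)

lemma c_nonneg {h : ℝ} (hh : 0 < h) (n s : ℕ) : 0 ≤ c h n s := by
  induction n generalizing s with
  | zero => unfold c; split <;> norm_num
  | succ n ih =>
    unfold c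
    apply Finset.sum_nonneg
    intro i _
    have := ih i
    positivity

lemma hasSum_c {h : ℝ} (hh : 0 < h) {x : ℝ} (hx : 2 * h ≤ x) (n : ℕ) :
    HasSum (fun s => c h n s * (P h x s)⁻¹) ((x ^ n)⁻¹) := by
  have hx0 : 0 < x := lt_of_lt_of_le (by positivity) hx
  induction n with
  | zero =>
    have : HasSum (fun s => c h 0 s * (P h x s)⁻¹) (c h 0 0 * (P h x 0)⁻¹) := by
      apply hasSum_single 0
      intro b hb
      simp [c, hb]
    simpa [c, P] using this
  | succ n ih =>
    set F : ℕ × ℕ → ℝ := fun p =>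
      c h n p.1 * (h ^ p.2 * (Nat.ascFactorial p.1 p.2 : ℝ) * (P h x (p.1 + p.2 + 1))⁻¹)
      with hF
    have hFnn : ∀ p, 0 ≤ F p := by
      intro p
      have h1 := c_nonneg hh n p.1
      have h2 := P_pos hh hx0 (p.1 + p.2 + 1)
      simp only [hF]
      positivity
    have hrow : ∀ s : ℕ, HasSum (fun j => F (s, j)) (c h n s * ((P h x s)⁻¹ * x⁻¹)) :=
      fun s => (hasSum_shift hh hx s).mul_left (c h n s)
    have hcol : HasSum (fun s => c h n s * ((P h x s)⁻¹ * x⁻¹)) ((x ^ n)⁻¹ * x⁻¹) := by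
      have := ih.mul_right x⁻¹
      simpa [mul_assoc] using this
    have hFsum : Summable F := by
      rw [summable_prod_of_nonneg hFnn]
      refine ⟨fun s => (hrow s).summable, ?_⟩
      apply Summable.congr hcol.summable
      intro s
      exact ((hrow s).tsum_eq).symm
    have hFhas : HasSum F ((x ^ n)⁻¹ * x⁻¹) := by
      rw [hFsum.hasSum_iff, Summable.tsum_prod' hFsum fun s => (hrow s).summable]
      rw [← hcol.tsum_eq]
      exact tsum_congr fun s => (hrow s).tsum_eq
    -- regroup fibers of (s, j) ↦ s + j + 1
    set G : ℕ × ℕ → ℝ := fun q => if q.2 < q.1 then F (q.2, q.1 - 1 - q.2) else 0 with hG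
    have hemb : Function.Injective (fun p : ℕ × ℕ => (p.1 + p.2 + 1, p.1)) := by
      intro p q hpq
      simp only [Prod.mk.injEq] at hpq
      obtain ⟨h1, h2⟩ := hpq
      exact Prod.ext h2 (by omega)
    have hcomp : G ∘ (fun p : ℕ × ℕ => (p.1 + p.2 + 1, p.1)) = F := by
      funext p
      simp only [Function.comp_apply, hG]
      rw [if_pos (by omega)]
      congr 1
      exact Prod.ext rfl (by omega)
    have hvan : ∀ q ∉ Set.range (fun p : ℕ × ℕ => (p.1 + p.2 + 1, p.1)), G q = 0 := by
      intro q hq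
      simp only [hG]
      rw [if_neg]
      intro hlt
      exact hq ⟨(q.2, q.1 - 1 - q.2), Prod.ext (by simp; omega) rfl⟩
    have hGhas : HasSum G ((x ^ n)⁻¹ * x⁻¹) := by
      rw [← Function.Injective.hasSum_iff hemb hvan, hcomp]
      exact hFhas
    have hGrow : ∀ t : ℕ, HasSum (fun s => G (t, s)) (c h (n + 1) t * (P h x t)⁻¹) := by
      intro t
      have hfin : ∀ s ∉ Finset.range t, G (t, s) = 0 := by
        intro s hs
        simp only [Finset.mem_range, not_lt] at hs
        simp only [hG]
        rw [if_neg (by omega)]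
      have : HasSum (fun s => G (t, s)) (∑ s ∈ Finset.range t, G (t, s)) :=
        hasSum_sum_of_ne_finset_zero hfin
      convert this using 1
      show c h (n + 1) t * (P h x t)⁻¹ = ∑ s ∈ Finset.range t, G (t, s)
      rw [show c h (n + 1) t = ∑ s ∈ Finset.range t,
          c h n s * h ^ (t - 1 - s) * (Nat.ascFactorial s (t - 1 - s) : ℝ) from rfl,
        Finset.sum_mul]
      apply Finset.sum_congr rfl
      intro s hs
      simp only [Finset.mem_range] at hs
      simp only [hG]
      rw [if_pos hs]
      show _ = c h n s * (h ^ (t - 1 - s) * (Nat.ascFactorial s (t - 1 - s) : ℝ) *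
        (P h x (s + (t - 1 - s) + 1))⁻¹)
      rw [show s + (t - 1 - s) + 1 = t by omega]
      ring
    have := HasSum.prod_fiberwise hGhas hGrow
    convert this using 1
    rw [pow_succ, mul_inv]

end FSAux

namespace FSAux

lemma P_succ' (h x : ℝ) (t : ℕ) : P h x (t + 1) = x * P h (x + h) t := by
  unfold P
  rw [Finset.prod_range_succ']
  simp only [Nat.cast_zero, zero_mul, add_zero]
  rw [mul_comm]
  congr 1
  apply Finset.prod_congr rfl
  intro k _
  push_cast
  ring

lemma kernel_compare (hh : 0 < h) {x1 x : ℝ} (h1 : 0 < x1) (hle : x1 ≤ x) (t : ℕ) :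
    (P h x (t + 1))⁻¹ ≤ x1 / x * (P h x1 (t + 1))⁻¹ := by
  have hx : 0 < x := lt_of_lt_of_le h1 hle
  have hp1 : 0 < P h (x1 + h) t := P_pos hh (by positivity) t
  have hp : 0 < P h (x + h) t := P_pos hh (by positivity) t
  rw [P_succ', P_succ', mul_inv, mul_inv]
  have heq : x1 / x * (x1⁻¹ * (P h (x1 + h) t)⁻¹) = x⁻¹ * (P h (x1 + h) t)⁻¹ := by
    field_simp
  rw [heq]
  apply mul_le_mul_of_nonneg_left _ (by positivity)
  apply inv_anti₀ hp1
  exact P_le_P hh (by positivity) (by linarith) t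

lemma d_zero (hh : 0 < h) (d : ℕ → ℂ) (M : ℝ)
    (hd : ∀ x : ℝ, M < x → HasSum (fun t => d t * (((P h x t : ℝ) : ℂ))⁻¹) 0) :
    d 0 = 0 := by
  set x0 : ℝ := max M 0 + 1 with hx0def
  have hMx0 : M < x0 := by
    have := le_max_left M 0
    simp only [hx0def]; linarith
  have hx0pos : (0:ℝ) < x0 := by
    have := le_max_right M 0
    simp only [hx0def]; linarith
  have hx0one : (1:ℝ) ≤ x0 := by
    have := le_max_right M 0
    simp only [hx0def]; linarith
  -- norm of terms, as a real function
  have hnorm : ∀ (x : ℝ) (t : ℕ), 0 < x →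
      ‖d t * (((P h x t : ℝ) : ℂ))⁻¹‖ = ‖d t‖ * (P h x t)⁻¹ := by
    intro x t hx
    rw [norm_mul, norm_inv, Complex.norm_real, Real.norm_eq_abs,
      abs_of_pos (P_pos hh hx t)]
  -- boundedness at x0
  obtain ⟨C, hC⟩ : ∃ C : ℝ, ∀ t, ‖d t‖ * (P h x0 t)⁻¹ ≤ C := by
    have h0 := (hd x0 hMx0).summable.tendsto_atTop_zero.norm
    have hbdd := h0.bddAbove_range
    obtain ⟨C, hC⟩ := hbdd
    refine ⟨C, fun t => ?_⟩
    rw [← hnorm x0 t hx0pos]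
    exact hC ⟨t, rfl⟩
  have hC0 : 0 ≤ C :=
    le_trans (mul_nonneg (norm_nonneg _) (inv_nonneg.mpr (le_of_lt (P_pos hh hx0pos 0)))) (hC 0)
  set x1 : ℝ := x0 + 2 * h with hx1def
  have hx1pos : 0 < x1 := by rw [hx1def]; positivity
  have hMx1 : M < x1 := by simp only [hx1def]; linarith
  -- summability of norms at x1
  set m : ℝ := min 1 h with hmdef
  have hmpos : 0 < m := lt_min one_pos hh
  have hsum1 : Summable (fun t : ℕ => ‖d t‖ * (P h x1 t)⁻¹) := by
    have hmaj : Summable (fun t : ℕ =>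
        (C * (x0 * (x0 + h)) / (m * m)) * (1 / ((t:ℝ) + 1) ^ 2)) := by
      apply Summable.mul_left
      have hbase : Summable (fun t : ℕ => 1 / ((t:ℝ)) ^ 2) :=
        Real.summable_one_div_nat_pow.mpr (by norm_num)
      have := (summable_nat_add_iff 1).mpr hbase
      apply this.congr
      intro t
      push_cast
      ring
    apply Summable.of_nonneg_of_le
      (fun t => by
        have := P_pos hh hx1pos t
        positivity)
      ?_ hmaj
    · intro t
      have hP0 := P_pos hh hx0pos t
      have hP1 := P_pos hh hx1pos t
      have hd0 : ‖d t‖ ≤ C * P h x0 t := by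
        have h2 := mul_le_mul_of_nonneg_right (hC t) (le_of_lt hP0)
        rwa [mul_assoc, inv_mul_cancel₀ (ne_of_gt hP0), mul_one] at h2
      have htel : P h x0 t * ((x0 + t * h) * (x0 + (t + 1) * h))
          = x0 * (x0 + h) * P h x1 t := by
        rw [hx1def]
        unfold P
        exact telescope x0 h t
      have hden1 : (0:ℝ) < x0 + t * h := by positivity
      have hden2 : (0:ℝ) < x0 + ((t:ℝ) + 1) * h := by positivity
      have hmb1 : m * ((t:ℝ) + 1) ≤ x0 + t * h := by
        have h1 : m ≤ 1 := min_le_left _ _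
        have h2 : m ≤ h := min_le_right _ _
        have ht : (0:ℝ) ≤ t := Nat.cast_nonneg t
        nlinarith
      have hmb2 : m * ((t:ℝ) + 1) ≤ x0 + ((t:ℝ) + 1) * h := by
        have h1 : m ≤ 1 := min_le_left _ _
        have h2 : m ≤ h := min_le_right _ _
        have ht : (0:ℝ) ≤ t := Nat.cast_nonneg t
        nlinarith
      calc ‖d t‖ * (P h x1 t)⁻¹ ≤ (C * P h x0 t) * (P h x1 t)⁻¹ := by
            apply mul_le_mul_of_nonneg_right hd0 (by positivity)
        _ = C * (x0 * (x0 + h)) / ((x0 + t * h) * (x0 + ((t:ℝ) + 1) * h)) := by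
            rw [eq_div_iff (by positivity)]
            calc C * P h x0 t * (P h x1 t)⁻¹ * ((x0 + ↑t * h) * (x0 + (↑t + 1) * h))
                = C * (P h x0 t * ((x0 + ↑t * h) * (x0 + (↑t + 1) * h))) * (P h x1 t)⁻¹ := by ring
              _ = C * (x0 * (x0 + h) * P h x1 t) * (P h x1 t)⁻¹ := by rw [htel]
              _ = C * (x0 * (x0 + h)) := by field_simp
        _ ≤ C * (x0 * (x0 + h)) / ((m * ((t:ℝ)+1)) * (m * ((t:ℝ)+1))) := by
            apply div_le_div_of_nonneg_left (by positivity) (by positivity)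
            exact mul_le_mul hmb1 hmb2 (by positivity) (le_of_lt hden1)
        _ = (C * (x0 * (x0 + h)) / (m * m)) * (1 / ((t:ℝ) + 1) ^ 2) := by
            rw [div_mul_div_comm, mul_one]
            congr 1
            ring
  -- the bound for large x
  set B : ℝ := ∑' t : ℕ, ‖d (t + 1)‖ * (P h x1 (t + 1))⁻¹ with hBdef
  have hsum1' : Summable (fun t : ℕ => ‖d (t + 1)‖ * (P h x1 (t + 1))⁻¹) :=
    (summable_nat_add_iff 1).mpr hsum1
  have hB0 : 0 ≤ B := tsum_nonneg fun t => by
    have := P_pos hh hx1pos (t + 1); positivity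
  have hbound : ∀ x : ℝ, x1 ≤ x → ‖d 0‖ ≤ x1 * B / x := by
    intro x hx
    have hxpos : 0 < x := lt_of_lt_of_le hx1pos hx
    have hMx : M < x := lt_of_lt_of_le hMx1 hx
    have hfull := hd x hMx
    have hshift := (hasSum_nat_add_iff' 1).mpr hfull
    simp only [Finset.range_one, Finset.sum_singleton, zero_sub] at hshift
    have hP0 : P h x 0 = 1 := by simp [P]
    rw [hP0] at hshift
    simp only [Complex.ofReal_one, inv_one, mul_one] at hshift
    -- ‖d 0‖ = ‖tsum‖
    have hsumx : Summable (fun t : ℕ => ‖d (t + 1) * (((P h x (t + 1) : ℝ) : ℂ))⁻¹‖) := by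
      have hmaj2 : Summable (fun t : ℕ => ‖d (t + 1)‖ * (x1 / x * (P h x1 (t + 1))⁻¹)) := by
        apply Summable.congr (hsum1'.mul_left (x1 / x))
        intro t; ring
      apply Summable.of_nonneg_of_le (fun t => norm_nonneg _) ?_ hmaj2
      intro t
      rw [hnorm x (t + 1) hxpos]
      exact mul_le_mul_of_nonneg_left (kernel_compare hh hx1pos hx t) (norm_nonneg _)
    have heq : ‖d 0‖ = ‖∑' t : ℕ, d (t + 1) * (((P h x (t + 1) : ℝ) : ℂ))⁻¹‖ := by
      rw [hshift.tsum_eq, norm_neg]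
    rw [heq]
    calc ‖∑' t : ℕ, d (t + 1) * (((P h x (t + 1) : ℝ) : ℂ))⁻¹‖
        ≤ ∑' t : ℕ, ‖d (t + 1) * (((P h x (t + 1) : ℝ) : ℂ))⁻¹‖ :=
          norm_tsum_le_tsum_norm hsumx
      _ ≤ ∑' t : ℕ, ‖d (t + 1)‖ * (x1 / x * (P h x1 (t + 1))⁻¹) := by
          apply Summable.tsum_le_tsum _ hsumx
          · apply Summable.congr (hsum1'.mul_left (x1 / x))
            intro t; ring
          · intro t
            rw [hnorm x (t + 1) hxpos]
            exact mul_le_mul_of_nonneg_left (kernel_compare hh hx1pos hx t) (norm_nonneg _)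
      _ = x1 * B / x := by
          rw [show (fun t : ℕ => ‖d (t + 1)‖ * (x1 / x * (P h x1 (t + 1))⁻¹))
              = fun t : ℕ => (x1 / x) * (‖d (t + 1)‖ * (P h x1 (t + 1))⁻¹) by
            funext t; ring]
          rw [tsum_mul_left, hBdef]
          ring
  -- conclude
  have htend : Filter.Tendsto (fun x : ℝ => x1 * B / x) Filter.atTop (nhds 0) :=
    Filter.Tendsto.div_atTop tendsto_const_nhds Filter.tendsto_id
  have hle : ‖d 0‖ ≤ 0 := by
    apply ge_of_tendsto htend
    filter_upwards [Filter.eventually_ge_atTop x1] with x hx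
    exact hbound x hx
  simpa using le_antisymm hle (norm_nonneg _)

end FSAux

namespace FSAux

lemma d_all_zero (hh : 0 < h) :
    ∀ (t : ℕ) (d : ℕ → ℂ) (M : ℝ),
      (∀ x : ℝ, M < x → HasSum (fun t => d t * (((P h x t : ℝ) : ℂ))⁻¹) 0) →
      d t = 0 := by
  intro t
  induction t with
  | zero => exact fun d M hd => d_zero hh d M hd
  | succ t iht =>
    intro d M hd
    have hd00 : d 0 = 0 := d_zero hh d M hd
    apply iht (fun j => d (j + 1)) (max M 0 + h)
    intro y hy
    set x : ℝ := y - h with hxdef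
    have hxM : M < x := by
      have h1 := le_max_left M 0
      simp only [hxdef]; linarith
    have hxpos : (0:ℝ) < x := by
      have h1 := le_max_right M 0
      simp only [hxdef]; linarith
    have hfull := hd x hxM
    have hshift := (hasSum_nat_add_iff' 1).mpr hfull
    simp only [Finset.range_one, Finset.sum_singleton, zero_sub, hd00, zero_mul,
      neg_zero] at hshift
    have hmul := hshift.mul_right ((x : ℂ))
    rw [zero_mul] at hmul
    have hxy : x + h = y := by simp [hxdef]
    have hfun : (fun j : ℕ => d (j + 1) * (((P h y j : ℝ) : ℂ))⁻¹)
        = fun j : ℕ => d (j + 1) * (((P h x (j + 1) : ℝ) : ℂ))⁻¹ * (x : ℂ) := by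
      funext j
      rw [P_succ' h x j, hxy]
      have hx0 : ((x : ℝ) : ℂ) ≠ 0 := by
        exact_mod_cast ne_of_gt hxpos
      push_cast
      rw [mul_inv]
      field_simp
    rw [hfun]
    exact hmul

end FSAux

/-- The coefficients of the `h`-factorial series expansion of `1/xⁿ` are
nonnegative real numbers. -/
theorem factorial_series_coeffs_of_inv_pow_nonneg
    (h : ℝ) (hh : 0 < h) (n : ℕ) (ψ : ℕ → ℂ) (R : ℝ)
    (hexp : ∀ x : ℂ, R < x.re →
      HasSum (fun s : ℕ => ψ s * (∏ k ∈ Finset.range s, (x + (k : ℂ) * (h : ℂ)))⁻¹)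
        ((x ^ n)⁻¹)) :
    ∀ s : ℕ, (ψ s).im = 0 ∧ 0 ≤ (ψ s).re := by
  have key : ∀ t, ψ t = ((FSAux.c h n t : ℝ) : ℂ) := by
    have hzero : ∀ x : ℝ, max R (2 * h) < x →
        HasSum (fun t => (ψ t - ((FSAux.c h n t : ℝ) : ℂ)) *
          (((FSAux.P h x t : ℝ) : ℂ))⁻¹) 0 := by
      intro x hx
      have hxR : R < x := lt_of_le_of_lt (le_max_left _ _) hx
      have hx2h : 2 * h ≤ x := le_of_lt (lt_of_le_of_lt (le_max_right _ _) hx)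
      have h1 := hexp (x : ℂ) (by rwa [Complex.ofReal_re])
      have hker : ∀ t : ℕ,
          (∏ k ∈ Finset.range t, ((x : ℂ) + (k : ℂ) * (h : ℂ)))
            = ((FSAux.P h x t : ℝ) : ℂ) := by
        intro t
        rw [FSAux.P, Complex.ofReal_prod]
        apply Finset.prod_congr rfl
        intro k _
        push_cast
        ring
      have h1' : HasSum (fun t => ψ t * (((FSAux.P h x t : ℝ) : ℂ))⁻¹)
          (((x : ℂ)) ^ n)⁻¹ := by
        simp only [← hker]
        exact h1
      have h2 : HasSum (fun t => ((FSAux.c h n t : ℝ) : ℂ) *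
          (((FSAux.P h x t : ℝ) : ℂ))⁻¹) (((x : ℂ)) ^ n)⁻¹ := by
        have hr := FSAux.hasSum_c hh hx2h n
        have := Complex.hasSum_ofReal.mpr hr
        have heq : (fun t => ((FSAux.c h n t * (FSAux.P h x t)⁻¹ : ℝ) : ℂ))
            = fun t => ((FSAux.c h n t : ℝ) : ℂ) * (((FSAux.P h x t : ℝ) : ℂ))⁻¹ := by
          funext t
          push_cast
          ring
        rw [heq] at this
        convert this using 2
        push_cast
        ring
      have hsub := h1'.sub h2
      simp only [sub_self] at hsub
      have hfn : (fun t => (ψ t - ((FSAux.c h n t : ℝ) : ℂ)) *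
          (((FSAux.P h x t : ℝ) : ℂ))⁻¹)
          = fun t => ψ t * (((FSAux.P h x t : ℝ) : ℂ))⁻¹ -
            ((FSAux.c h n t : ℝ) : ℂ) * (((FSAux.P h x t : ℝ) : ℂ))⁻¹ := by
        funext t
        ring
      rw [hfn]
      exact hsub
    intro t
    have hz := FSAux.d_all_zero hh t (fun j => ψ j - ((FSAux.c h n j : ℝ) : ℂ))
      (max R (2 * h)) hzero
    exact sub_eq_zero.mp hz
  intro s
  rw [key s]
  exact ⟨Complex.ofReal_im _, by rw [Complex.ofReal_re]; exact FSAux.c_nonneg hh n s⟩
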